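/- For the simple symmetric random walk, let U_{n,r} = Σ_{k=1}^n 1{R_k = r} denote the local time on edge r up to time n, where R_k = (1+S_{k-1}+S_k)/2. Then for every n ≥ 1, r ≥ 1, and integer u ≥ 1, P[U_{n,r} = u] = 2^(-n) · C(n, ⌊(n+r+u)/2⌋), and P[U_{n,r} = 0] = 2^(-n) · Σ_{k=1}^r C(n, ⌊(n+2k-r)/2⌋). -/

import Mathlib

open MeasureTheory ProbabilityTheory

/-- Binomial coefficient `C(n,k)` for an integer `k`, with the convention that it
vanishes for `k < 0` (and, via `Nat.choose`, for `k > n`). -/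
def choZ (n : ℕ) (k : ℤ) : ℕ := if k < 0 then 0 else n.choose k.toNat

noncomputable def gcnt (n : ℕ) (r : ℤ) (u : ℕ) : ℕ :=
  let r' := if 1 ≤ r then r else 1 - r
  if u = 0 then ∑ k ∈ Finset.Icc (1:ℤ) r', choZ n (((n:ℤ) + 2*k - r') / 2)
  else choZ n (((n:ℤ) + r' + u) / 2)
lemma choZ_pascal (n : ℕ) (k : ℤ) : choZ (n+1) k = choZ n (k-1) + choZ n k := by
  unfold choZ
  rcases lt_trichotomy k 0 with h | h | h
  · simp [h, show k - 1 < 0 by omega]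
  · subst h; simp
  · rw [if_neg (by omega), if_neg (by omega), if_neg (by omega)]
    have h1 : k.toNat = (k-1).toNat + 1 := by omega
    rw [h1, Nat.choose_succ_succ]
lemma gcnt_symm (n : ℕ) (r : ℤ) (u : ℕ) : gcnt n r u = gcnt n (1 - r) u := by
  unfold gcnt
  have : (if 1 ≤ r then r else 1 - r) = (if 1 ≤ 1 - r then 1 - r else 1 - (1-r)) := by
    split_ifs <;> omega
  rw [this]
lemma sum_Icc_top {M : Type*} [AddCommMonoid M] {b : ℤ} (hb : 1 ≤ b) (f : ℤ → M) :
    ∑ k ∈ Finset.Icc (1:ℤ) b, f k = (∑ k ∈ Finset.Icc (1:ℤ) (b-1), f k) + f b := by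
  have h1 : Finset.Icc (1:ℤ) b = insert b (Finset.Icc 1 (b-1)) := by
    ext x; simp only [Finset.mem_Icc, Finset.mem_insert]; omega
  rw [h1, Finset.sum_insert (by simp only [Finset.mem_Icc]; omega), add_comm]

lemma gcnt_pos (n : ℕ) {r : ℤ} (hr : 1 ≤ r) (u : ℕ) :
    gcnt n r u = if u = 0 then ∑ k ∈ Finset.Icc (1:ℤ) r, choZ n (((n:ℤ) + 2*k - r) / 2)
      else choZ n (((n:ℤ) + r + u) / 2) := by
  unfold gcnt; rw [if_pos hr]

lemma choZ_congr (n : ℕ) {a b : ℤ} (h : a = b) : choZ n a = choZ n b := by rw [h]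

lemma gcnt_rec_pos (n : ℕ) {r : ℤ} (hr : 1 ≤ r) (u : ℕ) :
    gcnt (n+1) r u =
      (if r = 1 then (if u = 0 then 0 else gcnt n 0 (u-1)) else gcnt n (r-1) u) +
      (if r = 0 then (if u = 0 then 0 else gcnt n 1 (u-1)) else gcnt n (r+1) u) := by
  rw [if_neg (by omega : ¬ r = 0)]
  rcases Nat.eq_zero_or_pos u with hu | hu
  · -- u = 0
    subst hu
    rw [gcnt_pos (n+1) hr, gcnt_pos n (show (1:ℤ) ≤ r + 1 by omega)]
    simp only [reduceIte]
    have hL : ∑ k ∈ Finset.Icc (1:ℤ) r, choZ (n+1) ((((n+1:ℕ):ℤ) + 2*k - r) / 2)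
        = (∑ k ∈ Finset.Icc (1:ℤ) r, choZ n (((n:ℤ) + 2*k - (r+1)) / 2))
          + ∑ k ∈ Finset.Icc (1:ℤ) r, choZ n (((n:ℤ) + 2*k - (r-1)) / 2) := by
      rw [← Finset.sum_add_distrib]
      refine Finset.sum_congr rfl fun k hk => ?_
      rw [choZ_pascal]
      have c1 : ((n:ℤ)+1) = ((n+1:ℕ):ℤ) := by push_cast; ring
      congr 1
      · exact choZ_congr n (by omega)
      · exact choZ_congr n (by omega)
    rw [hL]
    rcases eq_or_lt_of_le hr with h1 | h2
    · -- r = 1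
      have hr1 : r = 1 := h1.symm
      subst hr1
      rw [if_pos rfl, zero_add]
      rw [sum_Icc_top (show (1:ℤ) ≤ 1 + 1 by norm_num)]
      have : (1:ℤ) + 1 - 1 = 1 := by norm_num
      rw [this]
      simp only [Finset.Icc_self, Finset.sum_singleton]
      congr 1 <;> (refine choZ_congr n ?_; omega)
    · -- r ≥ 2
      rw [if_neg (by omega : ¬ r = 1), gcnt_pos n (show (1:ℤ) ≤ r - 1 by omega)]
      simp only [reduceIte]
      have e1 : ∑ k ∈ Finset.Icc (1:ℤ) r, choZ n (((n:ℤ) + 2*k - (r-1)) / 2)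
          = (∑ k ∈ Finset.Icc (1:ℤ) (r-1), choZ n (((n:ℤ) + 2*k - (r-1)) / 2))
            + choZ n (((n:ℤ) + r + 1) / 2) := by
        rw [sum_Icc_top hr]
        congr 1
        exact choZ_congr n (by omega)
      have e2 : ∑ k ∈ Finset.Icc (1:ℤ) (r+1), choZ n (((n:ℤ) + 2*k - (r+1)) / 2)
          = (∑ k ∈ Finset.Icc (1:ℤ) r, choZ n (((n:ℤ) + 2*k - (r+1)) / 2))
            + choZ n (((n:ℤ) + r + 1) / 2) := by
        rw [sum_Icc_top (show (1:ℤ) ≤ r + 1 by omega)]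
        have : r + 1 - 1 = r := by ring
        rw [this]
        congr 1
        exact choZ_congr n (by omega)
      rw [e1, e2]
      ring
  · -- u ≥ 1
    have hu0 : u ≠ 0 := by omega
    rw [gcnt_pos (n+1) hr, if_neg hu0]
    rcases eq_or_lt_of_le hr with h1 | h2
    · -- r = 1
      have hr1 : r = 1 := h1.symm
      subst hr1
      rw [if_pos rfl, if_neg hu0]
      rw [gcnt_pos n (show (1:ℤ) ≤ 1 + 1 by norm_num), if_neg hu0]
      rw [gcnt_symm n 0 (u-1),
        show (1:ℤ) - 0 = 1 by norm_num, gcnt_pos n le_rfl]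
      by_cases hv : u - 1 = 0
      · rw [if_pos hv]
        have hu1 : u = 1 := by omega
        subst hu1
        simp only [Finset.Icc_self, Finset.sum_singleton]
        rw [choZ_pascal]
        congr 1 <;> (refine choZ_congr n ?_; omega)
      · rw [if_neg hv]
        have hcast : ((u - 1 : ℕ) : ℤ) = (u : ℤ) - 1 := by omega
        rw [choZ_pascal]
        congr 1 <;> (refine choZ_congr n ?_; rw [hcast]; omega)
    · -- r ≥ 2
      rw [if_neg (by omega : ¬ r = 1),
        gcnt_pos n (show (1:ℤ) ≤ r - 1 by omega), if_neg hu0,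
        gcnt_pos n (show (1:ℤ) ≤ r + 1 by omega), if_neg hu0]
      rw [choZ_pascal]
      congr 1 <;> (refine choZ_congr n ?_; omega)

lemma gcnt_rec (n : ℕ) (r : ℤ) (u : ℕ) :
    gcnt (n+1) r u =
      (if r = 1 then (if u = 0 then 0 else gcnt n 0 (u-1)) else gcnt n (r-1) u) +
      (if r = 0 then (if u = 0 then 0 else gcnt n 1 (u-1)) else gcnt n (r+1) u) := by
  rcases le_or_gt 1 r with hr | hr
  · exact gcnt_rec_pos n hr u
  · have h1 : (1:ℤ) ≤ 1 - r := by omega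
    rw [gcnt_symm (n+1) r u, gcnt_rec_pos n h1 u]
    rw [if_neg (by omega : ¬ r = 1)]
    have e1 : gcnt n (1 - r - 1) u = gcnt n (r+1) u := by
      rw [gcnt_symm n (1-r-1) u]; congr 1; ring
    have e2 : gcnt n (1 - r + 1) u = gcnt n (r-1) u := by
      rw [gcnt_symm n (1-r+1) u]; congr 1; ring
    by_cases h0 : r = 0
    · subst h0
      rw [if_pos (by norm_num : (1:ℤ) - 0 = 1), if_pos rfl,
        if_neg (by norm_num : ¬ (1:ℤ) - 0 = 0), e2]
      rw [show gcnt n 0 (u-1) = gcnt n 1 (u-1) from by rw [gcnt_symm n 0]; norm_num]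
      rw [add_comm]
    · rw [if_neg (by omega : ¬ (1:ℤ) - r = 1), if_neg (by omega : ¬ (1:ℤ) - r = 0),
        if_neg h0, e1, e2, add_comm]

def cross : ℤ → List Bool → ℕ
  | _, [] => 0
  | r, b :: L =>
      (if (b = true ∧ r = 1) ∨ (b = false ∧ r = 0) then 1 else 0) +
        cross (r - (if b then 1 else -1)) L

lemma choZ_zero_eq (m : ℤ) : choZ 0 m = if m = 0 then 1 else 0 := by
  unfold choZ
  rcases lt_trichotomy m 0 with h | h | h
  · simp [h, show ¬ m = 0 by omega]
  · simp [h]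
  · rw [if_neg (by omega), if_neg (by omega)]
    have : m.toNat ≠ 0 := by omega
    simp [Nat.choose_eq_zero_iff, this, Nat.pos_of_ne_zero this]

lemma gcnt_zero (r : ℤ) (u : ℕ) : gcnt 0 r u = if u = 0 then 1 else 0 := by
  unfold gcnt
  set r' : ℤ := if 1 ≤ r then r else 1 - r with hr'
  have hr1 : 1 ≤ r' := by rw [hr']; split_ifs <;> omega
  by_cases hu : u = 0
  · rw [if_pos hu, if_pos hu]
    have k0mem : (r'+1)/2 ∈ Finset.Icc (1:ℤ) r' := by
      simp only [Finset.mem_Icc]; omega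
    rw [Finset.sum_eq_single_of_mem ((r'+1)/2) k0mem]
    · rw [choZ_zero_eq, if_pos (by push_cast; omega)]
    · intro k hk hne
      rw [choZ_zero_eq, if_neg ?_]
      simp only [Finset.mem_Icc] at hk
      push_cast
      omega
  · rw [if_neg hu, if_neg hu, choZ_zero_eq, if_neg ?_]
    have : 1 ≤ u := Nat.pos_of_ne_zero hu
    push_cast
    omega

/-- the count of boolean step-sequences -/
def cnt (n : ℕ) (r : ℤ) (u : ℕ) : ℕ :=
  (Finset.univ.filter (fun ε : Fin n → Bool => cross r (List.ofFn ε) = u)).card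

lemma card_split (n : ℕ) (p : (Fin (n+1) → Bool) → Prop) [DecidablePred p] :
    (Finset.univ.filter p).card =
      (Finset.univ.filter (fun ε : Fin n → Bool => p (Fin.cons true ε))).card +
      (Finset.univ.filter (fun ε : Fin n → Bool => p (Fin.cons false ε))).card := by
  rw [← Fintype.card_subtype, ← Fintype.card_subtype, ← Fintype.card_subtype]
  have e1 : {q : Bool × (Fin n → Bool) // p (Fin.cons q.1 q.2)} ≃ {x // p x} :=
    Equiv.subtypeEquiv (Fin.consEquiv (fun _ => Bool)) (fun q => Iff.rfl)
  rw [Fintype.card_congr e1.symm,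
    Fintype.card_congr (Equiv.subtypeProdEquivSigmaSubtype (fun b ε => p (Fin.cons b ε))),
    Fintype.card_sigma, Fintype.sum_bool]

lemma cons_cross (n : ℕ) (r : ℤ) (b : Bool) (ε : Fin n → Bool) :
    cross r (List.ofFn (Fin.cons b ε)) =
      (if (b = true ∧ r = 1) ∨ (b = false ∧ r = 0) then 1 else 0) +
        cross (r - (if b then 1 else -1)) (List.ofFn ε) := by
  rw [List.ofFn_succ]
  simp only [Fin.cons_zero, Fin.cons_succ]
  rfl

lemma count_cross (n : ℕ) : ∀ (r : ℤ) (u : ℕ), cnt n r u = gcnt n r u := by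
  induction n with
  | zero =>
    intro r u
    unfold cnt
    rw [gcnt_zero]
    simp only [List.ofFn_zero]
    show (Finset.univ.filter fun _ : Fin 0 → Bool => 0 = u).card = _
    by_cases hu : u = 0
    · subst hu
      simp
    · rw [if_neg hu]
      rw [Finset.filter_false_of_mem (fun x _ => by omega), Finset.card_empty]
  | succ n ih =>
    intro r u
    have hsplit := card_split n (fun ε => cross r (List.ofFn ε) = u)
    unfold cnt
    rw [hsplit, gcnt_rec]
    congr 1
    · -- b = true branch
      by_cases h1 : r = 1
      · subst h1
        rw [if_pos rfl]
        by_cases hu : u = 0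
        · subst hu
          rw [if_pos rfl, Finset.filter_false_of_mem, Finset.card_empty]
          intro ε _
          rw [cons_cross]; simp
        · rw [if_neg hu, ← ih 0 (u-1)]
          unfold cnt
          congr 1
          refine Finset.filter_congr fun ε _ => ?_
          simp only [cons_cross]
          norm_num
          omega
      · rw [if_neg h1, ← ih (r-1) u]
        unfold cnt
        congr 1
        refine Finset.filter_congr fun ε _ => ?_
        simp only [cons_cross]
        norm_num [h1]
    · -- b = false branch
      by_cases h0 : r = 0
      · subst h0
        rw [if_pos rfl]
        by_cases hu : u = 0
        · subst hu
          rw [if_pos rfl, Finset.filter_false_of_mem, Finset.card_empty]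
          intro ε _
          rw [cons_cross]; simp
        · rw [if_neg hu, ← ih 1 (u-1)]
          unfold cnt
          congr 1
          refine Finset.filter_congr fun ε _ => ?_
          simp only [cons_cross]
          norm_num
          omega
      · rw [if_neg h0, ← ih (r+1) u]
        unfold cnt
        congr 1
        refine Finset.filter_congr fun ε _ => ?_
        simp only [cons_cross]
        norm_num [h0, sub_neg_eq_add]

lemma cross_cons (r : ℤ) (b : Bool) (L : List Bool) :
    cross r (b :: L) = (if (b = true ∧ r = 1) ∨ (b = false ∧ r = 0) then 1 else 0)
      + cross (r - (if b then 1 else -1)) L := rfl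

lemma cross_eq_sum : ∀ (n : ℕ) (v : ℕ → ℤ), (∀ k, v k = 1 ∨ v k = -1) → ∀ r : ℤ,
    cross r (List.ofFn (fun i : Fin n => decide (v (i : ℕ) = 1))) =
      ∑ k ∈ Finset.range n,
        (if max (∑ j ∈ Finset.range k, v j) (∑ j ∈ Finset.range (k+1), v j) = r
          then 1 else 0) := by
  intro n
  induction n with
  | zero => intro v hv r; simp [cross]
  | succ n ih =>
    intro v hv r
    have tail := ih (fun k => v (k+1)) (fun k => hv (k+1))
    have hofn : (List.ofFn (fun i : Fin (n+1) => decide (v (i:ℕ) = 1)))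
        = (decide (v 0 = 1)) :: List.ofFn (fun i : Fin n => decide (v ((i:ℕ)+1) = 1)) := by
      rw [List.ofFn_succ]; simp [Fin.val_succ]; exact decide_eq_decide.mpr Iff.rfl
    rw [hofn,
      Finset.sum_range_succ' (fun k =>
        if max (∑ j ∈ Finset.range k, v j) (∑ j ∈ Finset.range (k+1), v j) = r
          then 1 else 0) n]
    have hsum : ∀ m : ℕ, (∑ j ∈ Finset.range (m+1), v j)
        = (∑ j ∈ Finset.range m, v (j+1)) + v 0 := fun m => Finset.sum_range_succ' v m
    rcases hv 0 with h0 | h0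
    · have hb : decide (v 0 = 1) = true := by simp [h0]
      rw [hb, cross_cons, if_pos rfl,
        if_congr (show ((true = true ∧ r = 1) ∨ (true = false ∧ r = 0)) ↔ r = 1 by simp)
          rfl rfl,
        tail (r - 1), add_comm]
      congr 1
      · refine Finset.sum_congr rfl fun k hk => ?_
        rw [hsum k, hsum (k+1), max_add_add_right, h0]
        exact if_congr (by omega) rfl rfl
      · simp only [zero_add, Finset.sum_range_zero, Finset.sum_range_one, h0,
          show max (0:ℤ) 1 = 1 from by norm_num]
        exact if_congr eq_comm rfl rfl
    · have hb : decide (v 0 = 1) = false := by simp [h0]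
      rw [hb, cross_cons, if_neg (show ¬ false = true from by simp), sub_neg_eq_add,
        if_congr (show ((false = true ∧ r = 1) ∨ (false = false ∧ r = 0)) ↔ r = 0 by simp)
          rfl rfl,
        tail (r + 1), add_comm]
      congr 1
      · refine Finset.sum_congr rfl fun k hk => ?_
        rw [hsum k, hsum (k+1), max_add_add_right, h0]
        exact if_congr (by omega) rfl rfl
      · simp only [zero_add, Finset.sum_range_zero, Finset.sum_range_one, h0,
          show max (0:ℤ) (-1) = 0 from by norm_num]
        exact if_congr eq_comm rfl rfl

lemma sum_Icc_one {M : Type*} [AddCommMonoid M] (f : ℕ → M) (n : ℕ) :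
    ∑ k ∈ Finset.Icc 1 n, f k = ∑ j ∈ Finset.range n, f (j+1) := by
  induction n with
  | zero => simp
  | succ n ih =>
    rw [Finset.sum_Icc_succ_top (by omega) f, Finset.sum_range_succ, ih]

lemma prob_count {Ω : Type*} [MeasurableSpace Ω] (P : Measure Ω) [IsProbabilityMeasure P]
    (V : ℕ → Ω → ℤ) (hVmeas : ∀ n, Measurable (V n))
    (hVfair : ∀ n, P {ω | V n ω = 1} = 1 / 2)
    (hVindep : iIndepFun V P)
    (n : ℕ) (Φ : (Fin n → Bool) → Prop) [DecidablePred Φ] :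
    P {ω | Φ (fun i => decide (V ((i:ℕ)+1) ω = 1))}
      = (Finset.univ.filter Φ).card / 2 ^ n := by
  classical
  set T : Bool → Set ℤ := fun b => if b then {1} else {1}ᶜ with hT
  set Sf : Finset ℕ := (Finset.univ : Finset (Fin n)).map
    ⟨fun (i : Fin n) => (i:ℕ)+1, fun a b h => Fin.ext (by simpa using h)⟩ with hSf
  have hmemS : ∀ k, k ∈ Sf ↔ ∃ i : Fin n, (i:ℕ)+1 = k := by
    intro k; simp [hSf]; exact Iff.rfl
  set sets : (Fin n → Bool) → ℕ → Set ℤ := fun ε k =>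
    if h : 1 ≤ k ∧ k - 1 < n then T (ε ⟨k-1, h.2⟩) else Set.univ with hsets
  have hsets_meas : ∀ ε k, MeasurableSet (sets ε k) := by
    intro ε k
    rw [hsets]
    dsimp only
    split_ifs with h
    · cases (ε ⟨k-1, h.2⟩) <;> simp [hT]
    · exact MeasurableSet.univ
  have hsets_succ : ∀ (ε : Fin n → Bool) (i : Fin n), sets ε ((i:ℕ)+1) = T (ε i) := by
    intro ε i
    rw [hsets]
    dsimp only
    rw [dif_pos (by omega : 1 ≤ (i:ℕ)+1 ∧ (i:ℕ)+1-1 < n)]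
    congr 1
  have hD : ∀ ε : Fin n → Bool,
      {ω | (fun i : Fin n => decide (V ((i:ℕ)+1) ω = 1)) = ε} = ⋂ k ∈ Sf, V k ⁻¹' sets ε k := by
    intro ε
    ext ω
    simp only [Set.mem_setOf_eq, funext_iff, Set.mem_iInter, Set.mem_preimage, hmemS]
    constructor
    · rintro h k ⟨i, rfl⟩
      rw [hsets_succ]
      have := h i
      cases hb : ε i
      · rw [hb] at this
        simp only [decide_eq_false_iff_not] at this
        simp [hT, this]
      · rw [hb] at this
        simp only [decide_eq_true_eq] at this
        simp [hT, this]
    · intro h i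
      have := h ((i:ℕ)+1) ⟨i, rfl⟩
      rw [hsets_succ] at this
      cases hb : ε i
      · rw [hb] at this
        simp only [hT] at this
        simp only [if_neg (Bool.false_ne_true)] at this
        simpa using this
      · rw [hb] at this
        simp only [hT, if_pos rfl] at this
        simpa using this
  have hhalf : ∀ (ε : Fin n → Bool) (k : ℕ), k ∈ Sf → P (V k ⁻¹' sets ε k) = 1/2 := by
    intro ε k hk
    rcases (hmemS k).1 hk with ⟨i, rfl⟩
    rw [hsets_succ]
    cases hb : ε i
    · rw [show T false = {1}ᶜ from by simp [hT]]
      have hpre : V ((i:ℕ)+1) ⁻¹' ({1}ᶜ) = {ω | V ((i:ℕ)+1) ω = 1}ᶜ := by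
        ext ω; simp
      rw [hpre, prob_compl_eq_one_sub (by exact (hVmeas _) (measurableSet_singleton 1)), hVfair]
      simp [one_div, ENNReal.one_sub_inv_two]
    · rw [show T true = {1} from by simp [hT]]
      have hpre : V ((i:ℕ)+1) ⁻¹' ({1} : Set ℤ) = {ω | V ((i:ℕ)+1) ω = 1} := by
        ext ω; simp
      rw [hpre, hVfair]
  have hDmeas : ∀ ε : Fin n → Bool,
      MeasurableSet {ω | (fun i : Fin n => decide (V ((i:ℕ)+1) ω = 1)) = ε} := by
    intro ε
    rw [hD]
    exact MeasurableSet.biInter (Finset.countable_toSet _)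
      (fun k _ => (hVmeas k) (hsets_meas ε k))
  have hDprob : ∀ ε : Fin n → Bool,
      P {ω | (fun i : Fin n => decide (V ((i:ℕ)+1) ω = 1)) = ε} = (1/2) ^ n := by
    intro ε
    rw [hD]
    rw [hVindep.measure_inter_preimage_eq_mul Sf (fun k hk => hsets_meas ε k)]
    rw [Finset.prod_congr rfl (fun k hk => hhalf ε k hk), Finset.prod_const]
    congr 1
    simp [hSf, Finset.card_image_of_injective, Fin.val_injective]
  have hunion : {ω | Φ (fun i : Fin n => decide (V ((i:ℕ)+1) ω = 1))}
      = ⋃ ε ∈ Finset.univ.filter Φ,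
          {ω | (fun i : Fin n => decide (V ((i:ℕ)+1) ω = 1)) = ε} := by
    ext ω
    simp only [Set.mem_setOf_eq, Set.mem_iUnion, Finset.mem_filter, Finset.mem_univ, true_and]
    constructor
    · intro h
      exact ⟨_, h, rfl⟩
    · rintro ⟨ε, hε, h⟩
      rw [h]
      exact hε
  rw [hunion, measure_biUnion_finset ?_ (fun ε _ => hDmeas ε)]
  · rw [Finset.sum_congr rfl (fun ε _ => hDprob ε), Finset.sum_const, nsmul_eq_mul]
    rw [one_div, ← ENNReal.inv_pow, ← div_eq_mul_inv]
  · intro ε hε ε' hε' hne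
    simp only [Function.onFun]
    rw [Set.disjoint_left]
    intro ω h1 h2
    exact hne (h1.symm.trans h2)

/-- Distribution of the edge local time `U_{n,r}` of the simple symmetric random
walk: for `n ≥ 1`, `r ≥ 1`, `P[U_{n,r} = u] = 2^(-n)·C(n, ⌊(n+r+u)/2⌋)` for `u ≥ 1`,
and `P[U_{n,r} = 0] = 2^(-n)·Σ_{k=1}^r C(n, ⌊(n+2k-r)/2⌋)`. -/
theorem stmt5
    {Ω : Type*} [MeasurableSpace Ω] (P : Measure Ω) [IsProbabilityMeasure P]
    (V : ℕ → Ω → ℤ)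
    (hVmeas : ∀ n, Measurable (V n))
    (hVval : ∀ n ω, V n ω = 1 ∨ V n ω = -1)
    (hVfair : ∀ n, P {ω | V n ω = 1} = 1 / 2)
    (hVindep : iIndepFun V P)
    (S : ℕ → Ω → ℤ) (hS : ∀ n ω, S n ω = ∑ k ∈ Finset.Icc 1 n, V k ω)
    (R : ℕ → Ω → ℤ) (hR : ∀ n ω, R n ω = (1 + S (n - 1) ω + S n ω) / 2)
    (U : ℕ → ℤ → Ω → ℕ)
    (hU : ∀ n r ω, U n r ω = ∑ k ∈ Finset.Icc 1 n, if R k ω = r then 1 else 0) :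
    ∀ n : ℕ, 1 ≤ n → ∀ r : ℤ, 1 ≤ r →
      (∀ u : ℕ, 1 ≤ u →
        P {ω | U n r ω = u} =
          (choZ n (Int.fdiv ((n : ℤ) + r + u) 2) : ENNReal) / 2 ^ n) ∧
      P {ω | U n r ω = 0} =
        (∑ k ∈ Finset.Icc (1 : ℤ) r,
          (choZ n (Int.fdiv ((n : ℤ) + 2 * k - r) 2) : ENNReal)) / 2 ^ n := by
  classical
  intro n hn r hr
  have hUω : ∀ ω, U n r ω
      = cross r (List.ofFn (fun i : Fin n => decide (V ((i:ℕ)+1) ω = 1))) := by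
    intro ω
    rw [hU, cross_eq_sum n (fun k => V (k+1) ω) (fun k => hVval (k+1) ω) r,
      sum_Icc_one (fun k => if R k ω = r then 1 else 0) n]
    refine Finset.sum_congr rfl fun k hk => ?_
    have hps : ∀ m, (∑ j ∈ Finset.range m, V (j+1) ω) = S m ω := by
      intro m; rw [hS, sum_Icc_one (fun k => V k ω) m]
    rw [hps k, hps (k+1)]
    have hsk : S (k+1) ω = S k ω + V (k+1) ω := by
      rw [hS, hS, Finset.sum_Icc_succ_top (by omega)]
    have hRk : R (k+1) ω = max (S k ω) (S (k+1) ω) := by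
      rw [hR]
      have h1 : (k+1) - 1 = k := by omega
      rw [h1]
      rcases hVval (k+1) ω with h | h
      · rw [hsk, h, max_eq_right (by omega)]; omega
      · rw [hsk, h, max_eq_left (by omega)]; omega
    rw [hRk]
  have key : ∀ u : ℕ, P {ω | U n r ω = u} = (gcnt n r u : ENNReal) / 2 ^ n := by
    intro u
    have hset : {ω | U n r ω = u}
        = {ω | (fun ε : Fin n → Bool => cross r (List.ofFn ε) = u)
            (fun i : Fin n => decide (V ((i:ℕ)+1) ω = 1))} := by
      ext ω
      simp only [Set.mem_setOf_eq, hUω ω]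
    rw [hset, prob_count P V hVmeas hVfair hVindep n
      (fun ε : Fin n → Bool => cross r (List.ofFn ε) = u)]
    congr 2
    exact count_cross n r u
  constructor
  · intro u hu
    rw [key u, gcnt_pos n hr, if_neg (by omega : ¬ u = 0),
      Int.fdiv_eq_ediv_of_nonneg _ (by norm_num : (0:ℤ) ≤ 2)]
  · rw [key 0, gcnt_pos n hr, if_pos rfl, Nat.cast_sum]
    congr 1
    refine Finset.sum_congr rfl fun k hk => ?_
    rw [Int.fdiv_eq_ediv_of_nonneg _ (by norm_num : (0:ℤ) ≤ 2)]
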